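/- arXiv:1603.02146 — 5 statements merged into one kernel-verified Lean document; each statement's English description precedes it below -/
import Mathlib

section
/- Let δ: A ⥤ B, α: A ⥤ C, β: B ⥤ D, γ: C ⥤ D be a strictly commutative square of categories. If α is an iso-fibration, then the square is Cartesian if and only if the induced functor A ⥤ B ×_D C is fully faithful and for all objects b of B and c of C with β(b) = γ(c) there exist an object a of A with α(a) = c and an isomorphism κ: δ(a) ≅ b satisfying β(κ) = 𝟙_{β(b)}. -/
open CategoryTheory

universe v₁ v₂ v₃ v₄ u₁ u₂ u₃ u₄

namespace PaperSquare

variable {A : Type u₁} {B : Type u₂} {C : Type u₃} {D : Type u₄}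
variable [Category.{v₁} A] [Category.{v₂} B] [Category.{v₃} C] [Category.{v₄} D]

/-- The strict fiber product `B ×_D C` of two functors `β : B ⥤ D` and `γ : C ⥤ D`:
objects are pairs `(b, c)` with `β(b) = γ(c)`, morphisms are pairs `(f, g)` with
`β(f) = γ(g)` (up to the identifications of the objects). -/
structure StrictPullback (β : B ⥤ D) (γ : C ⥤ D) : Type max u₂ u₃ where
  left : B
  right : C
  eq : β.obj left = γ.obj right

namespace StrictPullback

variable {β : B ⥤ D} {γ : C ⥤ D}

/-- Morphisms in the strict fiber product. -/
@[ext]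
structure Hom (x y : StrictPullback β γ) : Type max v₂ v₃ where
  left : x.left ⟶ y.left
  right : x.right ⟶ y.right
  w : β.map left = eqToHom x.eq ≫ γ.map right ≫ eqToHom y.eq.symm

instance : Category (StrictPullback β γ) where
  Hom := Hom
  id x := ⟨𝟙 _, 𝟙 _, by simp⟩
  comp f g := ⟨f.left ≫ g.left, f.right ≫ g.right, by
    rw [Functor.map_comp, Functor.map_comp, f.w, g.w]; simp⟩
  id_comp f := by apply Hom.ext <;> simp
  comp_id f := by apply Hom.ext <;> simp
  assoc f g h := by apply Hom.ext <;> simp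

@[simp] lemma id_left' (x : StrictPullback β γ) : (𝟙 x : Hom x x).left = 𝟙 x.left := rfl
@[simp] lemma id_right' (x : StrictPullback β γ) : (𝟙 x : Hom x x).right = 𝟙 x.right := rfl
@[simp] lemma comp_left' {x y z : StrictPullback β γ} (f : x ⟶ y) (g : y ⟶ z) :
    (f ≫ g).left = Hom.left f ≫ Hom.left g := rfl
@[simp] lemma comp_right' {x y z : StrictPullback β γ} (f : x ⟶ y) (g : y ⟶ z) :
    (f ≫ g).right = Hom.right f ≫ Hom.right g := rfl

end StrictPullback

/-- The functor `A ⥤ B ×_D C` induced by a strictly commutative square. -/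
def toPullback (δ : A ⥤ B) (α : A ⥤ C) (β : B ⥤ D) (γ : C ⥤ D)
    (hsq : δ ⋙ β = α ⋙ γ) : A ⥤ StrictPullback β γ where
  obj a := ⟨δ.obj a, α.obj a, Functor.congr_obj hsq a⟩
  map f := ⟨δ.map f, α.map f, Functor.congr_hom hsq f⟩
  map_id a := by apply StrictPullback.Hom.ext <;> simp
  map_comp f g := by apply StrictPullback.Hom.ext <;> simp

/-- The square is Cartesian if the induced functor `A ⥤ B ×_D C` is an equivalence. -/
def IsCartesianSq (δ : A ⥤ B) (α : A ⥤ C) (β : B ⥤ D) (γ : C ⥤ D)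
    (hsq : δ ⋙ β = α ⋙ γ) : Prop :=
  (toPullback δ α β γ hsq).IsEquivalence

/-- The full subcategory of the comma category `(β ↓ γ)` spanned by the objects
`(b, c, ν : β(b) → γ(c))` in which `ν` is an isomorphism. -/
def IsoComma (β : B ⥤ D) (γ : C ⥤ D) :=
  ObjectProperty.FullSubcategory (fun x : Comma β γ => IsIso x.hom)

instance (β : B ⥤ D) (γ : C ⥤ D) : Category (IsoComma β γ) :=
  ObjectProperty.FullSubcategory.category _

/-- The functor `A ⥤ (β ↓ γ)^≅` induced by a strictly commutative square. -/
def toIsoComma (δ : A ⥤ B) (α : A ⥤ C) (β : B ⥤ D) (γ : C ⥤ D)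
    (hsq : δ ⋙ β = α ⋙ γ) : A ⥤ IsoComma β γ where
  obj a := ⟨{ left := δ.obj a, right := α.obj a,
              hom := eqToHom (Functor.congr_obj hsq a) }, inferInstance⟩
  map {a a'} f := ObjectProperty.homMk
    { left := δ.map f
      right := α.map f
      w := by
        have h := Functor.congr_hom hsq f
        simp only [Functor.comp_map] at h
        simp [h] }

/-- The square is 2-Cartesian if the induced functor to the iso-comma category is an
equivalence. -/
def Is2CartesianSq (δ : A ⥤ B) (α : A ⥤ C) (β : B ⥤ D) (γ : C ⥤ D)
    (hsq : δ ⋙ β = α ⋙ γ) : Prop :=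
  (toIsoComma δ α β γ hsq).IsEquivalence

/-- A functor `β : B ⥤ D` is an iso-fibration if every isomorphism `β(b) ≅ d` lifts to an
isomorphism `b ≅ b'` with `β(b') = d` mapping to it strictly. -/
def IsIsoFibration (β : B ⥤ D) : Prop :=
  ∀ (b : B) (d : D) (ψ : β.obj b ≅ d), ∃ (b' : B) (e : β.obj b' = d) (φ : b ≅ b'),
    β.map φ.hom = ψ.hom ≫ eqToHom e.symm

/-- If `α` is an iso-fibration, then the square is Cartesian if and only if
the induced functor `A ⥤ B ×_D C` is fully faithful and for all objects `b` of `B` and `c` of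
`C` with `β(b) = γ(c)` there exist an object `a` of `A` with `α(a) = c` and an isomorphism
`κ : δ(a) ≅ b` with `β(κ) = 𝟙` (up to the identification of the objects). -/
theorem isCartesianSq_iff_of_isIsoFibration
    (δ : A ⥤ B) (α : A ⥤ C) (β : B ⥤ D) (γ : C ⥤ D) (hsq : δ ⋙ β = α ⋙ γ)
    (hα : IsIsoFibration α) :
    IsCartesianSq δ α β γ hsq ↔
      ((toPullback δ α β γ hsq).Full ∧ (toPullback δ α β γ hsq).Faithful) ∧
      ∀ (b : B) (c : C) (h : β.obj b = γ.obj c),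
        ∃ (a : A) (ha : α.obj a = c) (κ : δ.obj a ≅ b)
          (e : β.obj (δ.obj a) = β.obj b), β.map κ.hom = eqToHom e := by
  constructor
  · intro hE
    have : (toPullback δ α β γ hsq).IsEquivalence := hE
    refine ⟨⟨inferInstance, inferInstance⟩, fun b c h => ?_⟩
    obtain ⟨a, ⟨e⟩⟩ := Functor.EssSurj.mem_essImage (F := toPullback δ α β γ hsq)
      (⟨b, c, h⟩ : StrictPullback β γ)
    dsimp only [toPullback] at e
    -- isomorphism of right components
    have hri : IsIso e.hom.right := by
      refine ⟨e.inv.right, ?_, ?_⟩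
      · have := congrArg StrictPullback.Hom.right e.hom_inv_id
        simpa only [StrictPullback.comp_right', StrictPullback.id_right'] using this
      · have := congrArg StrictPullback.Hom.right e.inv_hom_id
        simpa only [StrictPullback.comp_right', StrictPullback.id_right'] using this
    have hli : IsIso e.hom.left := by
      refine ⟨e.inv.left, ?_, ?_⟩
      · have := congrArg StrictPullback.Hom.left e.hom_inv_id
        simpa only [StrictPullback.comp_left', StrictPullback.id_left'] using this
      · have := congrArg StrictPullback.Hom.left e.inv_hom_id
        simpa only [StrictPullback.comp_left', StrictPullback.id_left'] using this
    let lam : α.obj a ≅ c := asIso e.hom.right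
    obtain ⟨a', ha', φ, hφ⟩ := hα a c lam
    have hφinv : α.map φ.inv = eqToHom ha' ≫ lam.inv := by
      rw [← cancel_mono (α.map φ.hom), ← α.map_comp]
      simp [hφ]
    refine ⟨a', ha', (δ.mapIso φ).symm ≪≫ asIso e.hom.left, ?_, ?_⟩
    · rw [show β.obj (δ.obj a') = γ.obj (α.obj a') from Functor.congr_obj hsq a', ha', h]
    · have hw := e.hom.w
      have hmap := Functor.congr_hom hsq φ.inv
      simp only [Functor.comp_map] at hmap
      simp only [Iso.trans_hom, Iso.symm_hom, Functor.mapIso_inv, asIso_hom,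
        Functor.map_comp, hmap, hφinv, hw]
      simp [lam, eqToHom_map]
  · rintro ⟨⟨hfull, hfaith⟩, hlift⟩
    have hsurj : (toPullback δ α β γ hsq).EssSurj := by
      constructor
      intro x
      obtain ⟨a, ha, κ, e', hκ⟩ := hlift x.left x.right x.eq
      have hκinv : β.map κ.inv = eqToHom e'.symm := by
        rw [← cancel_epi (β.map κ.hom), ← β.map_comp]
        simp [hκ]
      refine ⟨a, ⟨?_⟩⟩
      refine ⟨⟨κ.hom, eqToHom ha, ?_⟩, ⟨κ.inv, eqToHom ha.symm, ?_⟩, ?_, ?_⟩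
      · simp [toPullback, hκ, eqToHom_map]
        exact (eqToHom_trans _ _).symm
      · simp [toPullback, hκinv, eqToHom_map]
        exact (eqToHom_trans _ _).symm
      · apply StrictPullback.Hom.ext <;> simp [toPullback]
      · apply StrictPullback.Hom.ext <;> simp [toPullback]
    exact { faithful := hfaith, full := hfull, essSurj := hsurj }


end PaperSquare
end

section
/- Let δ: A ⥤ B, α: A ⥤ C, β: B ⥤ D, γ: C ⥤ D be a strictly commutative square of categories. Assume α and β are Grothendieck fibrations and that δ maps morphisms that are strongly Cartesian with respect to α to morphisms that are strongly Cartesian with respect to β. Then the induced functor A ⥤ B ×_D C is fully faithful if and only if for every object c of C and all objects a, a' of A with α(a) = α(a') = c, the functor δ induces a bijection from the set of morphisms a → a' lying over 𝟙_c to the set of morphisms δ(a) → δ(a') lying over 𝟙_{γ(c)}. -/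
open CategoryTheory

universe v₁ v₂ v₃ v₄ u₁ u₂ u₃ u₄

namespace PaperSquare

variable {A : Type u₁} {B : Type u₂} {C : Type u₃} {D : Type u₄}
variable [Category.{v₁} A] [Category.{v₂} B] [Category.{v₃} C] [Category.{v₄} D]

/-- A morphism `ξ : x ⟶ y` is strongly coCartesian with respect to `p : E ⥤ S` if for every
morphism `h : x ⟶ z` and every factorization `p(h) = v ∘ p(ξ)` there is a unique morphism
`w : y ⟶ z` with `p(w) = v` and `w ∘ ξ = h`. -/
def IsStronglyCocartesian {E : Type u₁} {S : Type u₂} [Category.{v₁} E] [Category.{v₂} S]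
    (p : E ⥤ S) {x y : E} (ξ : x ⟶ y) : Prop :=
  ∀ (z : E) (h : x ⟶ z) (v : p.obj y ⟶ p.obj z), p.map h = p.map ξ ≫ v →
    ∃! w : y ⟶ z, p.map w = v ∧ ξ ≫ w = h

/-- A morphism `ξ : x ⟶ y` is strongly Cartesian with respect to `p : E ⥤ S` if for every
morphism `h : z ⟶ y` and every factorization `p(h) = p(ξ) ∘ v` there is a unique morphism
`w : z ⟶ x` with `p(w) = v` and `ξ ∘ w = h`. -/
def IsStronglyCartesian {E : Type u₁} {S : Type u₂} [Category.{v₁} E] [Category.{v₂} S]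
    (p : E ⥤ S) {x y : E} (ξ : x ⟶ y) : Prop :=
  ∀ (z : E) (h : z ⟶ y) (v : p.obj z ⟶ p.obj x), p.map h = v ≫ p.map ξ →
    ∃! w : z ⟶ x, p.map w = v ∧ w ≫ ξ = h

/-- `p : E ⥤ S` is a Grothendieck opfibration if every morphism `p(x) ⟶ s` admits a strongly
coCartesian lift starting at `x`. -/
def IsGrothendieckOpfibration {E : Type u₁} {S : Type u₂} [Category.{v₁} E] [Category.{v₂} S]
    (p : E ⥤ S) : Prop :=
  ∀ (x : E) (s : S) (f : p.obj x ⟶ s), ∃ (y : E) (ξ : x ⟶ y) (hy : p.obj y = s),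
    p.map ξ = f ≫ eqToHom hy.symm ∧ IsStronglyCocartesian p ξ

/-- `p : E ⥤ S` is a Grothendieck fibration if every morphism `s ⟶ p(y)` admits a strongly
Cartesian lift ending at `y`. -/
def IsGrothendieckFibration {E : Type u₁} {S : Type u₂} [Category.{v₁} E] [Category.{v₂} S]
    (p : E ⥤ S) : Prop :=
  ∀ (y : E) (s : S) (f : s ⟶ p.obj y), ∃ (x : E) (ξ : x ⟶ y) (hx : p.obj x = s),
    p.map ξ = eqToHom hx ≫ f ∧ IsStronglyCartesian p ξ

section
variable {E : Type u₁} {S : Type u₂} [Category.{v₁} E] [Category.{v₂} S]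

/-- The set of morphisms `x ⟶ y` of `E` lying over the identity (`x` and `y` both lying over
a common object of `S`). -/
def HomOverId (p : E ⥤ S) (x y : E) : Type v₁ :=
  {f : x ⟶ y // ∃ e : p.obj x = p.obj y, p.map f = eqToHom e}

end

variable {δ : A ⥤ B} {α : A ⥤ C} {β : B ⥤ D} {γ : C ⥤ D}

/-- The map induced by `δ` on morphisms lying over identities. -/
def deltaHomOverId (hsq : δ ⋙ β = α ⋙ γ) {a a' : A} (f : HomOverId α a a') :
    HomOverId β (δ.obj a) (δ.obj a') := by
  refine ⟨δ.map f.1, ?_⟩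
  obtain ⟨e, he⟩ := f.2
  refine ⟨?_, ?_⟩
  · have h1 : β.obj (δ.obj a) = γ.obj (α.obj a) := Functor.congr_obj hsq a
    have h2 : β.obj (δ.obj a') = γ.obj (α.obj a') := Functor.congr_obj hsq a'
    rw [h1, h2, e]
  · have h := Functor.congr_hom hsq f.1
    simp only [Functor.comp_map] at h
    rw [h, he]
    simp [eqToHom_map]

/-- If `α` and `β` are Grothendieck fibrations and `δ` maps strongly Cartesian
morphisms (w.r.t. `α`) to strongly Cartesian morphisms (w.r.t. `β`), then the induced functor
`A ⥤ B ×_D C` is fully faithful if and only if for every `c : C` and all `a, a'` in the fiber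
of `α` over `c`, the functor `δ` induces a bijection on morphisms lying over identities. -/
theorem fullyFaithful_toPullback_iff
    (hsq : δ ⋙ β = α ⋙ γ)
    (hα : IsGrothendieckFibration α) (hβ : IsGrothendieckFibration β)
    (hδ : ∀ {x y : A} (f : x ⟶ y), IsStronglyCartesian α f → IsStronglyCartesian β (δ.map f)) :
    ((toPullback δ α β γ hsq).Full ∧ (toPullback δ α β γ hsq).Faithful) ↔
      ∀ (c : C) (a a' : A), α.obj a = c → α.obj a' = c →
        Function.Bijective (deltaHomOverId hsq (a := a) (a' := a')) := by
  constructor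
  · rintro ⟨hfull, hfaith⟩ c a a' ha ha'
    constructor
    · rintro ⟨f, e, he⟩ ⟨f', e', he'⟩ h
      have hδf : δ.map f = δ.map f' := congrArg Subtype.val h
      apply Subtype.ext
      apply hfaith.map_injective
      apply StrictPullback.Hom.ext
      · exact hδf
      · show α.map f = α.map f'
        rw [he, he']
    · rintro ⟨g, e, he⟩
      obtain ⟨f, hf⟩ := hfull.map_surjective
        (X := a) (Y := a')
        (⟨g, eqToHom (ha.trans ha'.symm), he.trans (by erw [eqToHom_map]; simp; rfl)⟩ :
          (toPullback δ α β γ hsq).obj a ⟶ (toPullback δ α β γ hsq).obj a')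
      have hl : δ.map f = g := congrArg StrictPullback.Hom.left hf
      have hr : α.map f = eqToHom (ha.trans ha'.symm) :=
        congrArg StrictPullback.Hom.right hf
      exact ⟨⟨f, ha.trans ha'.symm, hr⟩, Subtype.ext hl⟩
  · intro hbij
    have hob : ∀ z : A, β.obj (δ.obj z) = γ.obj (α.obj z) := fun z =>
      Functor.congr_obj hsq z
    have hmap : ∀ {z z' : A} (m : z ⟶ z'), β.map (δ.map m) =
        eqToHom (hob z) ≫ γ.map (α.map m) ≫ eqToHom (hob z').symm := fun m =>
      Functor.congr_hom hsq m
    have hfaith : (toPullback δ α β γ hsq).Faithful := by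
      constructor
      intro a a' f f' h
      have hδf : δ.map f = δ.map f' := congrArg StrictPullback.Hom.left h
      have hαf : α.map f = α.map f' := congrArg StrictPullback.Hom.right h
      obtain ⟨x, ξ, hx, hξ, hcart⟩ := hα a' (α.obj a) (α.map f)
      obtain ⟨w, ⟨hw1, hw2⟩, -⟩ := hcart a f (eqToHom hx.symm) (by rw [hξ]; simp)
      obtain ⟨w', ⟨hw1', hw2'⟩, -⟩ := hcart a f' (eqToHom hx.symm)
        (by rw [hξ, ← hαf]; simp)
      have hβcart := hδ ξ hcart
      have hβw : β.map (δ.map w) = eqToHom (by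
          rw [hob a, hob x, hx]) := by
        rw [hmap w, hw1]; simp [eqToHom_map]
      have hβw' : β.map (δ.map w') = eqToHom (by
          rw [hob a, hob x, hx]) := by
        rw [hmap w', hw1']; simp [eqToHom_map]
      have hfact : β.map (δ.map f) = eqToHom (by
          rw [hob a, hob x, hx]) ≫
            β.map (δ.map ξ) := by
        conv_lhs => rw [← hw2, Functor.map_comp, Functor.map_comp, hβw]
      have huniq := hβcart (δ.obj a) (δ.map f) (eqToHom (by
          rw [hob a, hob x, hx])) hfact
      have hww' : δ.map w = δ.map w' := by
        have h1 := huniq.unique (y₁ := δ.map w) ⟨hβw, by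
          rw [← Functor.map_comp, hw2]⟩ (y₂ := δ.map w') ⟨hβw', by
          rw [← Functor.map_comp, hw2', hδf]⟩
        exact h1
      have hinj := (hbij (α.obj a) a x rfl hx).1
      have : (⟨w, hx.symm, hw1⟩ : HomOverId α a x) = ⟨w', hx.symm, hw1'⟩ :=
        hinj (Subtype.ext hww')
      have hwe : w = w' := congrArg Subtype.val this
      rw [← hw2, ← hw2', hwe]
    have hfull : (toPullback δ α β γ hsq).Full := by
      constructor
      intro a a' hom
      obtain ⟨x, ξ, hx, hξ, hcart⟩ := hα a' (α.obj a) hom.right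
      have hβcart := hδ ξ hcart
      have evx : β.obj (δ.obj a) = β.obj (δ.obj x) := by
        rw [hob a, hob x, hx]
      have hfact : β.map hom.left = eqToHom evx ≫ β.map (δ.map ξ) := by
        rw [hom.w, hmap ξ, hξ]
        erw [Functor.map_comp, eqToHom_map]
        simp [eqToHom_map]
        rfl
      obtain ⟨w, ⟨hw1, hw2⟩, -⟩ := hβcart (δ.obj a) hom.left (eqToHom evx) hfact
      obtain ⟨⟨f₀, e0, hf0⟩, hsurj⟩ := (hbij (α.obj a) a x rfl hx).2 ⟨w, evx, hw1⟩
      have hδf₀ : δ.map f₀ = w := congrArg Subtype.val hsurj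
      refine ⟨f₀ ≫ ξ, ?_⟩
      apply StrictPullback.Hom.ext
      · show δ.map (f₀ ≫ ξ) = hom.left
        rw [Functor.map_comp, hδf₀, hw2]
      · show α.map (f₀ ≫ ξ) = hom.right
        rw [Functor.map_comp, hf0, hξ]
        erw [eqToHom_trans_assoc, eqToHom_refl, Category.id_comp]
    exact ⟨hfull, hfaith⟩

end PaperSquare
end

section
/- Let F, G: B ⥤ C be pseudofunctors between bicategories and let ξ: F ⟶ G be a strong natural transformation. Then there exist a strong natural transformation η: G ⟶ F and invertible modifications ξ ∘ η ≅ id_G and η ∘ ξ ≅ id_F if and only if for every object X of B the component ξ_X: F(X) → G(X) is an equivalence in C. -/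
open CategoryTheory

open scoped Pseudofunctor.StrongTrans Oplax.OplaxTrans

universe w₁ w₂ v₁ v₂ u₁ u₂

namespace PaperBicat

variable {B : Type u₁} [Bicategory.{w₁, v₁} B] {C : Type u₂} [Bicategory.{w₂, v₂} C]

open Bicategory

section Construction

variable {F G : OplaxFunctor B C} (ξ : Oplax.StrongTrans F G)
  (v : ∀ X : B, G.obj X ⟶ F.obj X)
  (u : ∀ X : B, 𝟙 (F.obj X) ≅ ξ.app X ≫ v X)
  (c : ∀ X : B, v X ≫ ξ.app X ≅ 𝟙 (G.obj X))

/-- zig -/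
lemma zig (lt : ∀ X, leftZigzag (u X).hom (c X).hom =
      (λ_ (ξ.app X)).hom ≫ (ρ_ (ξ.app X)).inv) (X : B) :
    (c X).inv ▷ v X ⊗≫ v X ◁ (u X).inv = (λ_ (v X)).hom ≫ (ρ_ (v X)).inv := by
  have h : rightZigzagIso (u X) (c X) = ρ_ (v X) ≪≫ (λ_ (v X)).symm :=
    Iso.ext (right_triangle_of_left_triangle (u X) (c X) (lt X))
  have h2 := rightZigzagIso_inv (u X) (c X)
  rw [h] at h2
  simpa [leftZigzag] using h2.symm

/-- zag -/
lemma zag (lt : ∀ X, leftZigzag (u X).hom (c X).hom =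
      (λ_ (ξ.app X)).hom ≫ (ρ_ (ξ.app X)).inv) (X : B) :
    ξ.app X ◁ (c X).inv ⊗≫ (u X).inv ▷ ξ.app X =
      (ρ_ (ξ.app X)).hom ≫ (λ_ (ξ.app X)).inv := by
  have h : leftZigzagIso (u X) (c X) = λ_ (ξ.app X) ≪≫ (ρ_ (ξ.app X)).symm :=
    Iso.ext (lt X)
  have h2 := leftZigzagIso_inv (u X) (c X)
  rw [h] at h2
  simpa [rightZigzag] using h2.symm

/-- triangle, inverse form -/
lemma tri' (lt : ∀ X, leftZigzag (u X).hom (c X).hom =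
      (λ_ (ξ.app X)).hom ≫ (ρ_ (ξ.app X)).inv) (X : B) :
    (u X).inv ▷ ξ.app X =
      (α_ _ _ _).hom ≫ ξ.app X ◁ (c X).hom ≫ (ρ_ (ξ.app X)).hom ≫ (λ_ (ξ.app X)).inv := by
  rw [← cancel_epi ((u X).hom ▷ ξ.app X)]
  have h := lt X
  rw [leftZigzag] at h
  calc (u X).hom ▷ ξ.app X ≫ (u X).inv ▷ ξ.app X = 𝟙 _ := by
        rw [← comp_whiskerRight, Iso.hom_inv_id]; simp
    _ = ((u X).hom ▷ ξ.app X ⊗≫ ξ.app X ◁ (c X).hom) ≫ (ρ_ (ξ.app X)).hom ≫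
          (λ_ (ξ.app X)).inv := by rw [h]; simp
    _ = _ := by bicategory

lemma inv_nat_nat {X Y : B} {f g : X ⟶ Y} (β : f ⟶ g) :
    ξ.app X ◁ G.map₂ β ≫ (ξ.naturality g).inv =
      (ξ.naturality f).inv ≫ F.map₂ β ▷ ξ.app Y := by
  rw [← cancel_mono (ξ.naturality g).hom]
  simp

lemma inv_nat_id (X : B) :
    (ξ.naturality (𝟙 X)).inv ≫ F.mapId X ▷ ξ.app X =
      ξ.app X ◁ G.mapId X ≫ (ρ_ (ξ.app X)).hom ≫ (λ_ (ξ.app X)).inv := by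
  rw [← cancel_epi (ξ.naturality (𝟙 X)).hom, Iso.hom_inv_id_assoc,
    Oplax.StrongTrans.naturality_id_assoc]
  simp

lemma inv_nat_comp {X Y Z : B} (f : X ⟶ Y) (g : Y ⟶ Z) :
    (ξ.naturality (f ≫ g)).inv ≫ F.mapComp f g ▷ ξ.app Z =
      ξ.app X ◁ G.mapComp f g ⊗≫ (ξ.naturality f).inv ▷ G.map g ⊗≫
        F.map f ◁ (ξ.naturality g).inv ⊗≫ 𝟙 _ := by
  rw [← cancel_epi (ξ.naturality (f ≫ g)).hom, Iso.hom_inv_id_assoc]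
  symm
  calc (ξ.naturality (f ≫ g)).hom ≫ (ξ.app X ◁ G.mapComp f g ⊗≫
          (ξ.naturality f).inv ▷ G.map g ⊗≫ F.map f ◁ (ξ.naturality g).inv ⊗≫ 𝟙 _)
      = ((ξ.naturality (f ≫ g)).hom ≫ ξ.app X ◁ G.mapComp f g) ⊗≫
          (ξ.naturality f).inv ▷ G.map g ⊗≫ F.map f ◁ (ξ.naturality g).inv ⊗≫ 𝟙 _ := by
        bicategory
    _ = (F.mapComp f g ▷ ξ.app Z ≫ (α_ _ _ _).hom ≫ F.map f ◁ (ξ.naturality g).hom ≫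
          (α_ _ _ _).inv ≫ (ξ.naturality f).hom ▷ G.map g ≫ (α_ _ _ _).hom) ⊗≫
          (ξ.naturality f).inv ▷ G.map g ⊗≫ F.map f ◁ (ξ.naturality g).inv ⊗≫ 𝟙 _ := by
        rw [ξ.naturality_comp]
    _ = F.mapComp f g ▷ ξ.app Z ⊗≫ F.map f ◁ (ξ.naturality g).hom ⊗≫
          ((ξ.naturality f).hom ≫ (ξ.naturality f).inv) ▷ G.map g ⊗≫
          F.map f ◁ (ξ.naturality g).inv ⊗≫ 𝟙 _ := by
        bicategory
    _ = F.mapComp f g ▷ ξ.app Z ⊗≫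
          F.map f ◁ ((ξ.naturality g).hom ≫ (ξ.naturality g).inv) ⊗≫ 𝟙 _ := by
        rw [Iso.hom_inv_id]; bicategory
    _ = F.mapComp f g ▷ ξ.app Z := by
        rw [Iso.hom_inv_id]; bicategory

/-- The naturality 2-iso of the inverse transformation. -/
def natIso {X Y : B} (f : X ⟶ Y) : G.map f ≫ v Y ≅ v X ≫ F.map f :=
  (λ_ (G.map f ≫ v Y)).symm ≪≫ whiskerRightIso (c X).symm _ ≪⊗≫
    whiskerLeftIso (v X) (whiskerRightIso (ξ.naturality f).symm (v Y)) ≪⊗≫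
    whiskerLeftIso (v X ≫ F.map f) (u Y).symm ≪≫ ρ_ _

lemma natIso_hom {X Y : B} (f : X ⟶ Y) :
    (natIso ξ v u c f).hom =
      𝟙 _ ⊗≫ (c X).inv ▷ (G.map f ≫ v Y) ⊗≫ v X ◁ ((ξ.naturality f).inv ▷ v Y) ⊗≫
        (v X ≫ F.map f) ◁ (u Y).inv ⊗≫ 𝟙 _ := by
  dsimp [natIso, bicategoricalIsoComp]
  simp only [Iso.trans_hom, Iso.symm_hom, whiskerRightIso_hom, whiskerLeftIso_hom, Iso.refl_hom]
  bicategory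


section Axioms

lemma inv_nat_nat' {X Y : B} {f g : X ⟶ Y} (β : f ⟶ g) :
    G.map₂ β ▷ v Y ≫ (natIso ξ v u c g).hom =
      (natIso ξ v u c f).hom ≫ v X ◁ F.map₂ β := by
  rw [natIso_hom, natIso_hom]
  calc G.map₂ β ▷ v Y ≫ (𝟙 _ ⊗≫ (c X).inv ▷ (G.map g ≫ v Y) ⊗≫
          v X ◁ ((ξ.naturality g).inv ▷ v Y) ⊗≫ (v X ≫ F.map g) ◁ (u Y).inv ⊗≫ 𝟙 _)
      = 𝟙 _ ⊗≫ (𝟙 (G.obj X) ◁ (G.map₂ β ▷ v Y) ≫ (c X).inv ▷ (G.map g ≫ v Y)) ⊗≫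
          v X ◁ ((ξ.naturality g).inv ▷ v Y) ⊗≫ (v X ≫ F.map g) ◁ (u Y).inv ⊗≫ 𝟙 _ := by
        bicategory
    _ = 𝟙 _ ⊗≫ (c X).inv ▷ (G.map f ≫ v Y) ⊗≫
          v X ◁ (((ξ.app X ◁ G.map₂ β) ≫ (ξ.naturality g).inv) ▷ v Y) ⊗≫
          (v X ≫ F.map g) ◁ (u Y).inv ⊗≫ 𝟙 _ := by
        rw [whisker_exchange]; bicategory
    _ = 𝟙 _ ⊗≫ (c X).inv ▷ (G.map f ≫ v Y) ⊗≫ v X ◁ ((ξ.naturality f).inv ▷ v Y) ⊗≫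
          v X ◁ ((F.map f ◁ (u Y).inv) ≫ (F.map₂ β ▷ 𝟙 (F.obj Y))) ⊗≫ 𝟙 _ := by
        rw [inv_nat_nat, whisker_exchange]; bicategory
    _ = _ := by bicategory

lemma inv_nat_id' (lt : ∀ X, leftZigzag (u X).hom (c X).hom =
      (λ_ (ξ.app X)).hom ≫ (ρ_ (ξ.app X)).inv) (X : B) :
    (natIso ξ v u c (𝟙 X)).hom ≫ v X ◁ F.mapId X =
      G.mapId X ▷ v X ≫ (λ_ (v X)).hom ≫ (ρ_ (v X)).inv := by
  rw [natIso_hom]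
  calc (𝟙 _ ⊗≫ (c X).inv ▷ (G.map (𝟙 X) ≫ v X) ⊗≫
          v X ◁ ((ξ.naturality (𝟙 X)).inv ▷ v X) ⊗≫ (v X ≫ F.map (𝟙 X)) ◁ (u X).inv ⊗≫ 𝟙 _) ≫
        v X ◁ F.mapId X
      = 𝟙 _ ⊗≫ (c X).inv ▷ (G.map (𝟙 X) ≫ v X) ⊗≫
          v X ◁ ((ξ.naturality (𝟙 X)).inv ▷ v X) ⊗≫
          v X ◁ ((F.map (𝟙 X) ◁ (u X).inv) ≫ (F.mapId X ▷ 𝟙 (F.obj X))) ⊗≫ 𝟙 _ := by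
        bicategory
    _ = 𝟙 _ ⊗≫ (c X).inv ▷ (G.map (𝟙 X) ≫ v X) ⊗≫
          v X ◁ ((((ξ.naturality (𝟙 X)).inv ≫ F.mapId X ▷ ξ.app X)) ▷ v X) ⊗≫
          v X ◁ (u X).inv ⊗≫ 𝟙 _ := by
        rw [whisker_exchange]; bicategory
    _ = 𝟙 _ ⊗≫ ((c X).inv ▷ (G.map (𝟙 X) ≫ v X) ≫
          (v X ≫ ξ.app X) ◁ (G.mapId X ▷ v X)) ⊗≫ v X ◁ (u X).inv ⊗≫ 𝟙 _ := by
        rw [inv_nat_id]; bicategory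
    _ = 𝟙 _ ⊗≫ G.mapId X ▷ v X ⊗≫ ((c X).inv ▷ v X ⊗≫ v X ◁ (u X).inv) := by
        rw [← whisker_exchange]; bicategory
    _ = _ := by rw [zig ξ v u c lt X]; bicategory

lemma inv_nat_comp' (lt : ∀ X, leftZigzag (u X).hom (c X).hom =
      (λ_ (ξ.app X)).hom ≫ (ρ_ (ξ.app X)).inv)
    {X Y Z : B} (f : X ⟶ Y) (g : Y ⟶ Z) :
    (natIso ξ v u c (f ≫ g)).hom ≫ v X ◁ F.mapComp f g =
      G.mapComp f g ▷ v Z ≫ (α_ _ _ _).hom ≫ G.map f ◁ (natIso ξ v u c g).hom ≫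
        (α_ _ _ _).inv ≫ (natIso ξ v u c f).hom ▷ F.map g ≫ (α_ _ _ _).hom := by
  rw [natIso_hom, natIso_hom, natIso_hom]
  calc (𝟙 _ ⊗≫ (c X).inv ▷ (G.map (f ≫ g) ≫ v Z) ⊗≫
          v X ◁ ((ξ.naturality (f ≫ g)).inv ▷ v Z) ⊗≫
          (v X ≫ F.map (f ≫ g)) ◁ (u Z).inv ⊗≫ 𝟙 _) ≫ v X ◁ F.mapComp f g
      = 𝟙 _ ⊗≫ (c X).inv ▷ (G.map (f ≫ g) ≫ v Z) ⊗≫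
          v X ◁ ((ξ.naturality (f ≫ g)).inv ▷ v Z) ⊗≫
          v X ◁ ((F.map (f ≫ g) ◁ (u Z).inv) ≫ (F.mapComp f g ▷ 𝟙 (F.obj Z))) ⊗≫ 𝟙 _ := by
        bicategory
    _ = 𝟙 _ ⊗≫ (c X).inv ▷ (G.map (f ≫ g) ≫ v Z) ⊗≫
          v X ◁ (((ξ.naturality (f ≫ g)).inv ≫ F.mapComp f g ▷ ξ.app Z) ▷ v Z) ⊗≫
          (v X ≫ F.map f ≫ F.map g) ◁ (u Z).inv ⊗≫ 𝟙 _ := by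
        rw [whisker_exchange]; bicategory
    _ = 𝟙 _ ⊗≫ (c X).inv ▷ (G.map (f ≫ g) ≫ v Z) ⊗≫
          v X ◁ ((ξ.app X ◁ G.mapComp f g) ▷ v Z) ⊗≫
          v X ◁ (((ξ.naturality f).inv ▷ G.map g) ▷ v Z) ⊗≫
          v X ◁ ((F.map f ◁ (ξ.naturality g).inv) ▷ v Z) ⊗≫
          (v X ≫ F.map f ≫ F.map g) ◁ (u Z).inv ⊗≫ 𝟙 _ := by
        rw [inv_nat_comp]; bicategory
    _ = 𝟙 _ ⊗≫ (c X).inv ▷ (G.map (f ≫ g) ≫ v Z) ⊗≫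
          v X ◁ ((ξ.app X ◁ G.mapComp f g) ▷ v Z) ⊗≫
          v X ◁ (((ξ.naturality f).inv ▷ G.map g) ▷ v Z) ⊗≫
          (v X ≫ F.map f) ◁ ((ξ.app Y ◁ (c Y).inv ⊗≫ (u Y).inv ▷ ξ.app Y) ▷ (G.map g ≫ v Z)) ⊗≫
          v X ◁ ((F.map f ◁ (ξ.naturality g).inv) ▷ v Z) ⊗≫
          (v X ≫ F.map f ≫ F.map g) ◁ (u Z).inv ⊗≫ 𝟙 _ := by
        rw [zag ξ v u c lt Y]; bicategory
    _ = 𝟙 _ ⊗≫ (c X).inv ▷ (G.map (f ≫ g) ≫ v Z) ⊗≫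
          v X ◁ ((ξ.app X ◁ G.mapComp f g) ▷ v Z) ⊗≫
          v X ◁ (((ξ.naturality f).inv ▷ G.map g) ▷ v Z) ⊗≫
          (v X ≫ F.map f) ◁ ((ξ.app Y ◁ (c Y).inv) ▷ (G.map g ≫ v Z)) ⊗≫
          (v X ≫ F.map f) ◁ (((ξ.app Y ≫ v Y) ◁ (ξ.naturality g).inv ≫
            (u Y).inv ▷ (F.map g ≫ ξ.app Z)) ▷ v Z) ⊗≫
          (v X ≫ F.map f ≫ F.map g) ◁ (u Z).inv ⊗≫ 𝟙 _ := by
        rw [whisker_exchange (u Y).inv (ξ.naturality g).inv]; bicategory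
    _ = 𝟙 _ ⊗≫ (c X).inv ▷ (G.map (f ≫ g) ≫ v Z) ⊗≫
          v X ◁ ((ξ.app X ◁ G.mapComp f g) ▷ v Z) ⊗≫
          v X ◁ ((ξ.app X ≫ G.map f) ◁ ((c Y).inv ▷ (G.map g ≫ v Z)) ≫
            (ξ.naturality f).inv ▷ ((v Y ≫ ξ.app Y) ≫ (G.map g ≫ v Z))) ⊗≫
          ((v X ≫ F.map f) ≫ (ξ.app Y ≫ v Y)) ◁ ((ξ.naturality g).inv ▷ v Z) ⊗≫
          (v X ≫ F.map f) ◁ ((u Y).inv ▷ ((F.map g ≫ ξ.app Z) ≫ v Z)) ⊗≫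
          (v X ≫ F.map f ≫ F.map g) ◁ (u Z).inv ⊗≫ 𝟙 _ := by
        rw [whisker_exchange (ξ.naturality f).inv ((c Y).inv ▷ (G.map g ≫ v Z))]; bicategory
    _ = 𝟙 _ ⊗≫ (c X).inv ▷ (G.map (f ≫ g) ≫ v Z) ⊗≫
          v X ◁ ((ξ.app X ◁ G.mapComp f g) ▷ v Z) ⊗≫
          (v X ≫ ξ.app X ≫ G.map f) ◁ ((c Y).inv ▷ (G.map g ≫ v Z)) ⊗≫
          v X ◁ ((ξ.app X ≫ G.map f) ◁ (v Y ◁ ((ξ.naturality g).inv ▷ v Z)) ≫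
            (ξ.naturality f).inv ▷ (v Y ≫ (F.map g ≫ ξ.app Z) ≫ v Z)) ⊗≫
          (v X ≫ F.map f) ◁ ((u Y).inv ▷ ((F.map g ≫ ξ.app Z) ≫ v Z)) ⊗≫
          (v X ≫ F.map f ≫ F.map g) ◁ (u Z).inv ⊗≫ 𝟙 _ := by
        rw [whisker_exchange (ξ.naturality f).inv (v Y ◁ ((ξ.naturality g).inv ▷ v Z))]
        bicategory
    _ = 𝟙 _ ⊗≫ (c X).inv ▷ (G.map (f ≫ g) ≫ v Z) ⊗≫
          v X ◁ ((ξ.app X ◁ G.mapComp f g) ▷ v Z) ⊗≫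
          (v X ≫ ξ.app X ≫ G.map f) ◁ ((c Y).inv ▷ (G.map g ≫ v Z)) ⊗≫
          (v X ≫ (ξ.app X ≫ G.map f) ≫ v Y) ◁ ((ξ.naturality g).inv ▷ v Z) ⊗≫
          v X ◁ ((ξ.naturality f).inv ▷ (v Y ≫ (F.map g ≫ ξ.app Z) ≫ v Z)) ⊗≫
          (v X ≫ F.map f) ◁ (((ξ.app Y ≫ v Y) ◁ (F.map g ◁ (u Z).inv) ≫
            (u Y).inv ▷ (F.map g ≫ 𝟙 (F.obj Z)))) ⊗≫ 𝟙 _ := by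
        rw [whisker_exchange (u Y).inv (F.map g ◁ (u Z).inv)]; bicategory
    _ = 𝟙 _ ⊗≫ (c X).inv ▷ (G.map (f ≫ g) ≫ v Z) ⊗≫
          v X ◁ ((ξ.app X ◁ G.mapComp f g) ▷ v Z) ⊗≫
          (v X ≫ ξ.app X ≫ G.map f) ◁ ((c Y).inv ▷ (G.map g ≫ v Z)) ⊗≫
          (v X ≫ (ξ.app X ≫ G.map f) ≫ v Y) ◁ ((ξ.naturality g).inv ▷ v Z) ⊗≫
          v X ◁ ((ξ.app X ≫ G.map f) ◁ ((v Y ≫ F.map g) ◁ (u Z).inv) ≫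
            (ξ.naturality f).inv ▷ ((v Y ≫ F.map g) ≫ 𝟙 (F.obj Z))) ⊗≫
          (v X ≫ F.map f) ◁ ((u Y).inv ▷ F.map g) ⊗≫ 𝟙 _ := by
        rw [whisker_exchange (ξ.naturality f).inv ((v Y ≫ F.map g) ◁ (u Z).inv)]; bicategory
    _ = 𝟙 _ ⊗≫ (𝟙 (G.obj X) ◁ (G.mapComp f g ▷ v Z ⊗≫
            G.map f ◁ ((c Y).inv ▷ (G.map g ≫ v Z)) ⊗≫
            (G.map f ≫ v Y) ◁ ((ξ.naturality g).inv ▷ v Z) ⊗≫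
            (G.map f ≫ v Y ≫ F.map g) ◁ (u Z).inv ⊗≫ 𝟙 (G.map f ≫ v Y ≫ F.map g)) ≫
          (c X).inv ▷ (G.map f ≫ v Y ≫ F.map g)) ⊗≫
          v X ◁ ((ξ.naturality f).inv ▷ (v Y ≫ F.map g)) ⊗≫
          (v X ≫ F.map f) ◁ ((u Y).inv ▷ F.map g) ⊗≫ 𝟙 _ := by
        rw [whisker_exchange (c X).inv (G.mapComp f g ▷ v Z ⊗≫
            G.map f ◁ ((c Y).inv ▷ (G.map g ≫ v Z)) ⊗≫
            (G.map f ≫ v Y) ◁ ((ξ.naturality g).inv ▷ v Z) ⊗≫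
            (G.map f ≫ v Y ≫ F.map g) ◁ (u Z).inv ⊗≫ 𝟙 (G.map f ≫ v Y ≫ F.map g))]
        bicategory
    _ = _ := by bicategory

/-- The inverse strong transformation. -/
def inverse (lt : ∀ X, leftZigzag (u X).hom (c X).hom =
      (λ_ (ξ.app X)).hom ≫ (ρ_ (ξ.app X)).inv) : Oplax.StrongTrans G F where
  app := v
  naturality f := natIso ξ v u c f
  naturality_naturality β := inv_nat_nat' ξ v u c β
  naturality_id X := inv_nat_id' ξ v u c lt X
  naturality_comp f g := inv_nat_comp' ξ v u c lt f g

/-- The counit modification iso. -/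
def counitModIso (lt : ∀ X, leftZigzag (u X).hom (c X).hom =
      (λ_ (ξ.app X)).hom ≫ (ρ_ (ξ.app X)).inv) :
    (show G ⟶ G from (Oplax.StrongTrans.vcomp (inverse ξ v u c lt) ξ).toOplax) ≅
      (show G ⟶ G from (Oplax.StrongTrans.id G).toOplax) :=
  Oplax.OplaxTrans.isoMk (fun X => c X) (fun {X Y} f => by
    dsimp [Oplax.StrongTrans.vcomp, Oplax.StrongTrans.mkOfOplax,
      Oplax.StrongTrans.id, inverse, Oplax.StrongTrans.toOplax, Oplax.OplaxTrans.vcomp, Oplax.OplaxTrans.id]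
    simp only [whiskerRightIso_hom, whiskerLeftIso_hom]
    rw [natIso_hom]
    symm
    calc ((α_ (G.map f) (v Y) (ξ.app Y)).inv ≫
          (𝟙 _ ⊗≫ (c X).inv ▷ (G.map f ≫ v Y) ⊗≫ v X ◁ ((ξ.naturality f).inv ▷ v Y) ⊗≫
            (v X ≫ F.map f) ◁ (u Y).inv ⊗≫ 𝟙 _) ▷ ξ.app Y ≫
          (α_ (v X) (F.map f) (ξ.app Y)).hom ≫ v X ◁ (ξ.naturality f).hom ≫
          (α_ (v X) (ξ.app X) (G.map f)).inv) ≫ (c X).hom ▷ G.map f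
        = 𝟙 _ ⊗≫ (c X).inv ▷ ((G.map f ≫ v Y) ≫ ξ.app Y) ⊗≫
            v X ◁ (((ξ.naturality f).inv ▷ v Y) ▷ ξ.app Y) ⊗≫
            (v X ≫ F.map f) ◁ ((u Y).inv ▷ ξ.app Y) ⊗≫
            v X ◁ (ξ.naturality f).hom ⊗≫ (c X).hom ▷ G.map f ⊗≫ 𝟙 _ := by
          bicategory
      _ = 𝟙 _ ⊗≫ (c X).inv ▷ ((G.map f ≫ v Y) ≫ ξ.app Y) ⊗≫
            v X ◁ ((ξ.naturality f).inv ▷ (v Y ≫ ξ.app Y) ≫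
              (F.map f ≫ ξ.app Y) ◁ (c Y).hom) ⊗≫
            v X ◁ (ξ.naturality f).hom ⊗≫ (c X).hom ▷ G.map f ⊗≫ 𝟙 _ := by
          rw [tri' ξ v u c lt Y]; bicategory
      _ = 𝟙 _ ⊗≫ (c X).inv ▷ ((G.map f ≫ v Y) ≫ ξ.app Y) ⊗≫
            v X ◁ ((ξ.app X ≫ G.map f) ◁ (c Y).hom ≫
              (ξ.naturality f).inv ▷ 𝟙 (G.obj Y)) ⊗≫
            v X ◁ (ξ.naturality f).hom ⊗≫ (c X).hom ▷ G.map f ⊗≫ 𝟙 _ := by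
          rw [whisker_exchange (ξ.naturality f).inv (c Y).hom]
      _ = 𝟙 _ ⊗≫ (c X).inv ▷ ((G.map f ≫ v Y) ≫ ξ.app Y) ⊗≫
            (v X ≫ ξ.app X ≫ G.map f) ◁ (c Y).hom ⊗≫
            v X ◁ ((ξ.naturality f).inv ≫ (ξ.naturality f).hom) ⊗≫
            (c X).hom ▷ G.map f ⊗≫ 𝟙 _ := by
          bicategory
      _ = 𝟙 _ ⊗≫ (c X).inv ▷ ((G.map f ≫ v Y) ≫ ξ.app Y) ⊗≫
            ((v X ≫ ξ.app X) ◁ (G.map f ◁ (c Y).hom) ≫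
              (c X).hom ▷ (G.map f ≫ 𝟙 (G.obj Y))) ⊗≫ 𝟙 _ := by
          rw [Iso.inv_hom_id]; bicategory
      _ = 𝟙 _ ⊗≫ (c X).inv ▷ ((G.map f ≫ v Y) ≫ ξ.app Y) ⊗≫
            ((c X).hom ▷ (G.map f ≫ v Y ≫ ξ.app Y) ≫
              𝟙 (G.obj X) ◁ (G.map f ◁ (c Y).hom)) ⊗≫ 𝟙 _ := by
          rw [whisker_exchange (c X).hom (G.map f ◁ (c Y).hom)]
      _ = 𝟙 _ ⊗≫ ((c X).inv ≫ (c X).hom) ▷ (G.map f ≫ v Y ≫ ξ.app Y) ⊗≫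
            𝟙 (G.obj X) ◁ (G.map f ◁ (c Y).hom) ⊗≫ 𝟙 _ := by
          bicategory
      _ = _ := by rw [Iso.inv_hom_id]; bicategory)

/-- The unit modification iso. -/
def unitModIso (lt : ∀ X, leftZigzag (u X).hom (c X).hom =
      (λ_ (ξ.app X)).hom ≫ (ρ_ (ξ.app X)).inv) :
    (show F ⟶ F from (Oplax.StrongTrans.vcomp ξ (inverse ξ v u c lt)).toOplax) ≅
      (show F ⟶ F from (Oplax.StrongTrans.id F).toOplax) :=
  Oplax.OplaxTrans.isoMk (fun X => (u X).symm) (fun {X Y} f => by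
    dsimp [Oplax.StrongTrans.vcomp, Oplax.StrongTrans.mkOfOplax,
      Oplax.StrongTrans.id, inverse, Oplax.StrongTrans.toOplax, Oplax.OplaxTrans.vcomp, Oplax.OplaxTrans.id]
    simp only [whiskerRightIso_hom, whiskerLeftIso_hom]
    rw [natIso_hom]
    symm
    calc ((α_ (F.map f) (ξ.app Y) (v Y)).inv ≫
          (ξ.naturality f).hom ▷ v Y ≫ (α_ (ξ.app X) (G.map f) (v Y)).hom ≫
          ξ.app X ◁ (𝟙 _ ⊗≫ (c X).inv ▷ (G.map f ≫ v Y) ⊗≫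
            v X ◁ ((ξ.naturality f).inv ▷ v Y) ⊗≫
            (v X ≫ F.map f) ◁ (u Y).inv ⊗≫ 𝟙 _) ≫
          (α_ (ξ.app X) (v X) (F.map f)).inv) ≫ (u X).inv ▷ F.map f
        = 𝟙 _ ⊗≫ (ξ.naturality f).hom ▷ v Y ⊗≫
            ξ.app X ◁ ((c X).inv ▷ (G.map f ≫ v Y)) ⊗≫
            (ξ.app X ≫ v X) ◁ ((ξ.naturality f).inv ▷ v Y) ⊗≫
            ((ξ.app X ≫ v X) ◁ (F.map f ◁ (u Y).inv) ≫
              (u X).inv ▷ (F.map f ≫ 𝟙 (F.obj Y))) ⊗≫ 𝟙 _ := by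
          bicategory
      _ = 𝟙 _ ⊗≫ (ξ.naturality f).hom ▷ v Y ⊗≫
            ξ.app X ◁ ((c X).inv ▷ (G.map f ≫ v Y)) ⊗≫
            ((ξ.app X ≫ v X) ◁ ((ξ.naturality f).inv ▷ v Y) ≫
              (u X).inv ▷ ((F.map f ≫ ξ.app Y) ≫ v Y)) ⊗≫
            F.map f ◁ (u Y).inv ⊗≫ 𝟙 _ := by
          rw [whisker_exchange (u X).inv (F.map f ◁ (u Y).inv)]; bicategory
      _ = 𝟙 _ ⊗≫ (ξ.naturality f).hom ▷ v Y ⊗≫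
            ((ξ.app X ◁ (c X).inv ⊗≫ (u X).inv ▷ ξ.app X) ▷ (G.map f ≫ v Y)) ⊗≫
            (ξ.naturality f).inv ▷ v Y ⊗≫ F.map f ◁ (u Y).inv ⊗≫ 𝟙 _ := by
          rw [whisker_exchange (u X).inv ((ξ.naturality f).inv ▷ v Y)]; bicategory
      _ = 𝟙 _ ⊗≫ ((ξ.naturality f).hom ≫ (ξ.naturality f).inv) ▷ v Y ⊗≫
            F.map f ◁ (u Y).inv ⊗≫ 𝟙 _ := by
          rw [zag ξ v u c lt X]; bicategory
      _ = _ := by rw [Iso.hom_inv_id]; bicategory)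

end Axioms

end Construction

/-- A 1-morphism `u : x ⟶ y` in a bicategory is an equivalence if there is a 1-morphism
`v : y ⟶ x` together with invertible 2-cells `𝟙 x ≅ u ≫ v` and `v ≫ u ≅ 𝟙 y`. -/
def IsEquivalence1Cell {x y : C} (u : x ⟶ y) : Prop :=
  ∃ v : y ⟶ x, Nonempty (𝟙 x ≅ u ≫ v) ∧ Nonempty (v ≫ u ≅ 𝟙 y)

/-- A strong natural transformation `ξ : F ⟶ G` between pseudofunctors admits
a strong natural transformation `η : G ⟶ F` together with invertible modifications
`ξ ∘ η ≅ id_G` and `η ∘ ξ ≅ id_F` if and only if every component `ξ_X` is an equivalence. -/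
theorem strongNatTrans_equivalence_iff_pointwise
    (F G : Pseudofunctor B C) (ξ : F ⟶ G) :
    (∃ η : G ⟶ F,
        Nonempty ((show G.toOplax ⟶ G.toOplax from (η ≫ ξ).toOplax.toOplax) ≅
          (show G.toOplax ⟶ G.toOplax from (𝟙 G : G ⟶ G).toOplax.toOplax)) ∧
        Nonempty ((show F.toOplax ⟶ F.toOplax from (ξ ≫ η).toOplax.toOplax) ≅
          (show F.toOplax ⟶ F.toOplax from (𝟙 F : F ⟶ F).toOplax.toOplax))) ↔
      ∀ X : B, IsEquivalence1Cell (ξ.app X) := by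
  constructor
  · rintro ⟨η, ⟨Γ₁⟩, ⟨Γ₂⟩⟩ X
    refine ⟨η.app X, ⟨⟨Γ₂.inv.as.app X, Γ₂.hom.as.app X, ?_, ?_⟩⟩, ⟨⟨Γ₁.hom.as.app X, Γ₁.inv.as.app X, ?_, ?_⟩⟩⟩
    · have h := congrArg (fun m => m.as.app X) Γ₂.inv_hom_id; exact h
    · have h := congrArg (fun m => m.as.app X) Γ₂.hom_inv_id; exact h
    · have h := congrArg (fun m => m.as.app X) Γ₁.hom_inv_id; exact h
    · have h := congrArg (fun m => m.as.app X) Γ₁.inv_hom_id; exact h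
  · intro h
    choose v hu hc using h
    let u₀ : ∀ X : B, 𝟙 (F.obj X) ≅ ξ.app X ≫ v X := fun X => (hu X).some
    let c₀ : ∀ X : B, v X ≫ ξ.app X ≅ 𝟙 (G.obj X) := fun X => (hc X).some
    let c' : ∀ X : B, v X ≫ ξ.app X ≅ 𝟙 (G.obj X) := fun X => adjointifyCounit (u₀ X) (c₀ X)
    have lt : ∀ X, leftZigzag (u₀ X).hom (c' X).hom =
        (λ_ (ξ.app X)).hom ≫ (ρ_ (ξ.app X)).inv := by
      intro X
      have h := congrArg Iso.hom (adjointifyCounit_left_triangle (u₀ X) (c₀ X))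
      simpa using h
    exact ⟨Pseudofunctor.StrongTrans.mkOfOplax (inverse ξ.toOplax v u₀ c' lt), ⟨counitModIso ξ.toOplax v u₀ c' lt⟩, ⟨unitModIso ξ.toOplax v u₀ c' lt⟩⟩


end PaperBicat
end

section
/- Let α: I ⥤ J and β: J ⥤ K be functors between small categories. Let P be the strict fiber product over J of the codomain projection (α ↓ 𝟭_J) ⥤ J and the domain projection (β ↓ 𝟭_K) ⥤ J, so that the objects of P are tuples (i, j, f: α(i) → j, k, g: β(j) → k). Define Φ: P ⥤ (β ∘ α ↓ 𝟭_K) by (i, j, f, k, g) ↦ (i, k, g ∘ β(f)) and Ψ: (β ∘ α ↓ 𝟭_K) ⥤ P by (i, k, h) ↦ (i, α(i), 𝟙_{α(i)}, k, h). Then Φ ∘ Ψ = 𝟭, Ψ is left adjoint to Φ with identity unit, both Φ and Ψ commute strictly with the projections of both categories to I and to K, and every component of the counit Ψ ∘ Φ ⟹ 𝟭_P is mapped to an identity by the projections to I and to K. -/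
open CategoryTheory

universe v₁ v₂ v₃ u₁ u₂ u₃

namespace PaperComma9

variable {I : Type u₁} {J : Type u₂} {K : Type u₃}
variable [Category.{v₁} I] [Category.{v₂} J] [Category.{v₃} K]

/-- The strict fiber product over `J` of the codomain projection `(α ↓ 𝟭_J) ⥤ J` and the
domain projection `(β ↓ 𝟭_K) ⥤ J`; its objects are tuples `(i, j, f : α(i) → j, k, g : β(j) → k)`. -/
structure P (α : I ⥤ J) (β : J ⥤ K) : Type max u₁ u₂ u₃ v₂ v₃ where
  i : I
  j : J
  f : α.obj i ⟶ j
  k : K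
  g : β.obj j ⟶ k

namespace P

variable {α : I ⥤ J} {β : J ⥤ K}

/-- Morphisms in `P`: pairs of morphisms in the two comma categories agreeing on `J`. -/
@[ext]
structure Hom (x y : P α β) : Type max v₁ v₂ v₃ where
  u : x.i ⟶ y.i
  v : x.j ⟶ y.j
  w : x.k ⟶ y.k
  sq1 : α.map u ≫ y.f = x.f ≫ v
  sq2 : β.map v ≫ y.g = x.g ≫ w

instance : Category (P α β) where
  Hom := Hom
  id x := ⟨𝟙 _, 𝟙 _, 𝟙 _, by simp, by simp⟩
  comp m m' := ⟨m.u ≫ m'.u, m.v ≫ m'.v, m.w ≫ m'.w,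
    by rw [Functor.map_comp, Category.assoc, m'.sq1, ← Category.assoc, m.sq1, Category.assoc],
    by rw [Functor.map_comp, Category.assoc, m'.sq2, ← Category.assoc, m.sq2, Category.assoc]⟩
  id_comp m := by apply Hom.ext <;> simp
  comp_id m := by apply Hom.ext <;> simp
  assoc m m' m'' := by apply Hom.ext <;> simp

@[simp] lemma id_u (x : P α β) : (𝟙 x : Hom x x).u = 𝟙 x.i := rfl
@[simp] lemma id_v (x : P α β) : (𝟙 x : Hom x x).v = 𝟙 x.j := rfl
@[simp] lemma id_w (x : P α β) : (𝟙 x : Hom x x).w = 𝟙 x.k := rfl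
@[simp] lemma comp_u {x y z : P α β} (m : x ⟶ y) (m' : y ⟶ z) :
    (m ≫ m').u = Hom.u m ≫ Hom.u m' := rfl
@[simp] lemma comp_v {x y z : P α β} (m : x ⟶ y) (m' : y ⟶ z) :
    (m ≫ m').v = Hom.v m ≫ Hom.v m' := rfl
@[simp] lemma comp_w {x y z : P α β} (m : x ⟶ y) (m' : y ⟶ z) :
    (m ≫ m').w = Hom.w m ≫ Hom.w m' := rfl

/-- Projection of `P` to `I`. -/
def projI : P α β ⥤ I where
  obj x := x.i
  map m := m.u

/-- Projection of `P` to `K`. -/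
def projK : P α β ⥤ K where
  obj x := x.k
  map m := m.w

end P

variable (α : I ⥤ J) (β : J ⥤ K)

/-- The functor `Φ : P ⥤ (β ∘ α ↓ 𝟭_K)`, `(i, j, f, k, g) ↦ (i, k, g ∘ β(f))`. -/
def Phi : P α β ⥤ Comma (α ⋙ β) (𝟭 K) where
  obj p := ⟨p.i, p.k, β.map p.f ≫ p.g⟩
  map m :=
    { left := m.u
      right := m.w
      w := by
        dsimp
        rw [← Category.assoc, ← Functor.map_comp, m.sq1, Functor.map_comp,
          Category.assoc, m.sq2, Category.assoc] }
  map_id p := by aesop_cat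
  map_comp m m' := by aesop_cat

/-- The functor `Ψ : (β ∘ α ↓ 𝟭_K) ⥤ P`, `(i, k, h) ↦ (i, α(i), 𝟙, k, h)`. -/
def Psi : Comma (α ⋙ β) (𝟭 K) ⥤ P α β where
  obj x := ⟨x.left, α.obj x.left, 𝟙 _, x.right, x.hom⟩
  map m := ⟨m.left, α.map m.left, m.right, by simp, by simpa using m.w⟩
  map_id x := by apply P.Hom.ext <;> simp
  map_comp m m' := by apply P.Hom.ext <;> simp

theorem psi_phi_eq : Psi α β ⋙ Phi α β = 𝟭 (Comma (α ⋙ β) (𝟭 K)) := by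
  refine CategoryTheory.Functor.ext (fun x => by cases x; simp [Psi, Phi]) (fun x y m => ?_)
  apply CommaMorphism.ext <;> simp only [Comma.comp_left, Comma.comp_right, Comma.eqToHom_left, Comma.eqToHom_right, Functor.id_map]
  all_goals erw [eqToHom_refl, eqToHom_refl, Category.id_comp, Category.comp_id]
  all_goals rfl

lemma unit_app_left (x : Comma (α ⋙ β) (𝟭 K)) : ((eqToHom (psi_phi_eq α β).symm).app x).left = 𝟙 x.left := by
  rw [eqToHom_app, Comma.eqToHom_left]; rfl
lemma unit_app_right (x : Comma (α ⋙ β) (𝟭 K)) : ((eqToHom (psi_phi_eq α β).symm).app x).right = 𝟙 x.right := by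
  rw [eqToHom_app, Comma.eqToHom_right]; rfl

/-- The counit of the adjunction. -/
def counit : Phi α β ⋙ Psi α β ⟶ 𝟭 (P α β) where
  app p := ⟨𝟙 p.i, p.f, 𝟙 p.k, by simp [Phi, Psi], by simp [Phi, Psi]⟩
  naturality p q m := by apply P.Hom.ext <;> simp [Phi, Psi, m.sq1]

/-- The adjunction `Ψ ⊣ Φ` with identity unit. -/
def adjPsiPhi : Psi α β ⊣ Phi α β where
  unit := eqToHom (psi_phi_eq α β).symm
  counit := counit α β
  left_triangle_components x := by
    apply P.Hom.ext <;>
      simp [counit, Psi, Phi, eqToHom_app, eqToHom_map]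
    · exact unit_app_left α β x
    · exact (congrArg α.map (unit_app_left α β x)).trans (α.map_id _)
    · exact unit_app_right α β x
  right_triangle_components p := by
    apply CommaMorphism.ext <;>
      simp [counit, Psi, Phi, eqToHom_app, eqToHom_map]
    · exact unit_app_left α β _
    · exact unit_app_right α β _

/-- **Statement 9.** `Φ ∘ Ψ = 𝟭`, `Ψ` is left adjoint to `Φ` with identity unit, both
functors commute strictly with the projections to `I` and to `K`, and the components of the
counit are mapped to identities by both projections. -/
theorem psi_phi_adjunction :
    ∃ h : Psi α β ⋙ Phi α β = 𝟭 (Comma (α ⋙ β) (𝟭 K)),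
      (Phi α β ⋙ Comma.fst (α ⋙ β) (𝟭 K) = P.projI) ∧
      (Phi α β ⋙ Comma.snd (α ⋙ β) (𝟭 K) = P.projK) ∧
      (Psi α β ⋙ P.projI = Comma.fst (α ⋙ β) (𝟭 K)) ∧
      (Psi α β ⋙ P.projK = Comma.snd (α ⋙ β) (𝟭 K)) ∧
      ∃ adj : Psi α β ⊣ Phi α β,
        adj.unit = eqToHom h.symm ∧
        ∀ p : P α β, P.projI.map (adj.counit.app p) = 𝟙 p.i ∧
          P.projK.map (adj.counit.app p) = 𝟙 p.k := by
  refine ⟨psi_phi_eq α β, rfl, rfl, rfl, rfl, adjPsiPhi α β, rfl, fun p => ⟨rfl, rfl⟩⟩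

end PaperComma9
end

section
/- Let α: J ⥤ I and β: K ⥤ J be functors between small categories. Let Q be the strict fiber product over J of the codomain projection (𝟭_I ↓ α) ⥤ J and the domain projection (𝟭_J ↓ β) ⥤ J, so that the objects of Q are tuples (i, j, f: i → α(j), k, g: j → β(k)). Define Φ: Q ⥤ (𝟭_I ↓ α ∘ β) by (i, j, f, k, g) ↦ (i, k, α(g) ∘ f) and Ψ: (𝟭_I ↓ α ∘ β) ⥤ Q by (i, k, h) ↦ (i, β(k), h, k, 𝟙_{β(k)}). Then Φ ∘ Ψ = 𝟭, Φ is left adjoint to Ψ with identity counit, both functors commute strictly with the projections of both categories to I and to K, and every component of the unit 𝟭_Q ⟹ Ψ ∘ Φ is mapped to an identity by the projections to I and to K. -/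
open CategoryTheory

universe v₁ v₂ v₃ u₁ u₂ u₃

namespace PaperComma10

variable {I : Type u₁} {J : Type u₂} {K : Type u₃}
variable [Category.{v₁} I] [Category.{v₂} J] [Category.{v₃} K]

/-- The strict fiber product over `J` of the codomain projection `(𝟭_I ↓ α) ⥤ J` and the
domain projection `(𝟭_J ↓ β) ⥤ J`; its objects are tuples
`(i, j, f : i → α(j), k, g : j → β(k))`. -/
structure Q (α : J ⥤ I) (β : K ⥤ J) : Type max u₁ u₂ u₃ v₁ v₂ where
  i : I
  j : J
  f : i ⟶ α.obj j
  k : K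
  g : j ⟶ β.obj k

namespace Q

variable {α : J ⥤ I} {β : K ⥤ J}

/-- Morphisms in `Q`: pairs of morphisms in the two comma categories agreeing on `J`. -/
@[ext]
structure Hom (x y : Q α β) : Type max v₁ v₂ v₃ where
  u : x.i ⟶ y.i
  v : x.j ⟶ y.j
  w : x.k ⟶ y.k
  sq1 : u ≫ y.f = x.f ≫ α.map v
  sq2 : v ≫ y.g = x.g ≫ β.map w

instance : Category (Q α β) where
  Hom := Hom
  id x := ⟨𝟙 _, 𝟙 _, 𝟙 _, by simp, by simp⟩
  comp m m' := ⟨m.u ≫ m'.u, m.v ≫ m'.v, m.w ≫ m'.w,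
    by rw [Category.assoc, m'.sq1, ← Category.assoc, m.sq1, Category.assoc, ← Functor.map_comp],
    by rw [Category.assoc, m'.sq2, ← Category.assoc, m.sq2, Category.assoc, ← Functor.map_comp]⟩
  id_comp m := by apply Hom.ext <;> simp
  comp_id m := by apply Hom.ext <;> simp
  assoc m m' m'' := by apply Hom.ext <;> simp

@[simp] lemma id_u (x : Q α β) : (𝟙 x : Hom x x).u = 𝟙 x.i := rfl
@[simp] lemma id_v (x : Q α β) : (𝟙 x : Hom x x).v = 𝟙 x.j := rfl
@[simp] lemma id_w (x : Q α β) : (𝟙 x : Hom x x).w = 𝟙 x.k := rfl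
@[simp] lemma comp_u {x y z : Q α β} (m : x ⟶ y) (m' : y ⟶ z) :
    (m ≫ m').u = Hom.u m ≫ Hom.u m' := rfl
@[simp] lemma comp_v {x y z : Q α β} (m : x ⟶ y) (m' : y ⟶ z) :
    (m ≫ m').v = Hom.v m ≫ Hom.v m' := rfl
@[simp] lemma comp_w {x y z : Q α β} (m : x ⟶ y) (m' : y ⟶ z) :
    (m ≫ m').w = Hom.w m ≫ Hom.w m' := rfl

/-- Projection of `Q` to `I`. -/
def projI : Q α β ⥤ I where
  obj x := x.i
  map m := m.u

/-- Projection of `Q` to `K`. -/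
def projK : Q α β ⥤ K where
  obj x := x.k
  map m := m.w

end Q

variable (α : J ⥤ I) (β : K ⥤ J)

/-- The functor `Φ : Q ⥤ (𝟭_I ↓ α ∘ β)`, `(i, j, f, k, g) ↦ (i, k, α(g) ∘ f)`. -/
def Phi : Q α β ⥤ Comma (𝟭 I) (β ⋙ α) where
  obj q := ⟨q.i, q.k, q.f ≫ α.map q.g⟩
  map m :=
    { left := m.u
      right := m.w
      w := by
        dsimp
        rw [← Category.assoc, m.sq1, Category.assoc, ← Functor.map_comp, m.sq2,
          Functor.map_comp, Category.assoc] }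
  map_id q := by aesop_cat
  map_comp m m' := by aesop_cat

/-- The functor `Ψ : (𝟭_I ↓ α ∘ β) ⥤ Q`, `(i, k, h) ↦ (i, β(k), h, k, 𝟙)`. -/
def Psi : Comma (𝟭 I) (β ⋙ α) ⥤ Q α β where
  obj x := ⟨x.left, β.obj x.right, x.hom, x.right, 𝟙 _⟩
  map m := ⟨m.left, β.map m.right, m.right, by simpa using m.w, by simp⟩
  map_id x := by apply Q.Hom.ext <;> simp
  map_comp m m' := by apply Q.Hom.ext <;> simp

lemma psi_phi_eq : Psi α β ⋙ Phi α β = 𝟭 (Comma (𝟭 I) (β ⋙ α)) := by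
  have hobj : ∀ x, (Psi α β ⋙ Phi α β).obj x = (𝟭 (Comma (𝟭 I) (β ⋙ α))).obj x := by
    intro x; cases x; dsimp [Phi, Psi]; congr 1; simp
  refine CategoryTheory.Functor.ext hobj (fun x y m => ?_)
  apply CommaMorphism.ext <;>
    simp only [Comma.comp_left, Comma.comp_right, Comma.eqToHom_left, Comma.eqToHom_right] <;>
    simp [Phi, Psi, Comma.eqToHom_left, Comma.eqToHom_right]
  · exact (Category.id_comp m.left).symm
  · exact (Category.id_comp m.right).symm

lemma psi_phi_eqToHom_app_left (x : Comma (𝟭 I) (β ⋙ α)) :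
    ((eqToHom (psi_phi_eq α β)).app x).left = 𝟙 x.left := by
  rw [eqToHom_app, Comma.eqToHom_left]; rfl

lemma psi_phi_eqToHom_app_right (x : Comma (𝟭 I) (β ⋙ α)) :
    ((eqToHom (psi_phi_eq α β)).app x).right = 𝟙 x.right := by
  rw [eqToHom_app, Comma.eqToHom_right]; rfl

/-- The unit of the adjunction. -/
def unitQ : 𝟭 (Q α β) ⟶ Phi α β ⋙ Psi α β where
  app q := ⟨𝟙 _, q.g, 𝟙 _, by simp [Phi, Psi], by simp [Phi, Psi]⟩
  naturality x y m := by
    apply Q.Hom.ext <;> simp [Phi, Psi, m.sq2]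

/-- The counit of the adjunction. -/
def counitQ : Phi α β ⊣ Psi α β :=
  Adjunction.mkOfUnitCounit
    { unit := unitQ α β
      counit := eqToHom (psi_phi_eq α β)
      left_triangle := by
        ext q <;>
          simp [Phi, Psi, unitQ, eqToHom_app, Comma.eqToHom_left, Comma.eqToHom_right]
        exacts [psi_phi_eqToHom_app_left α β _, psi_phi_eqToHom_app_right α β _]
      right_triangle := by
        ext x
        all_goals
          simp only [Phi, Psi, unitQ, eqToHom_app, Comma.eqToHom_left, Comma.eqToHom_right,
            NatTrans.comp_app, Functor.whiskerRight_app, Functor.whiskerLeft_app, Functor.associator_hom_app,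
            NatTrans.id_app, Functor.comp_obj, Functor.id_obj, Category.id_comp,
            Category.comp_id]
        all_goals (apply Q.Hom.ext <;> simp)
        exacts [psi_phi_eqToHom_app_left α β x,
          (congrArg β.map (psi_phi_eqToHom_app_right α β x)).trans (β.map_id _),
          psi_phi_eqToHom_app_right α β x] }

/-- **Statement 10.** `Φ ∘ Ψ = 𝟭`, `Φ` is left adjoint to `Ψ` with identity counit, both
functors commute strictly with the projections to `I` and to `K`, and the components of the
unit are mapped to identities by both projections. -/
theorem phi_psi_adjunction :
    ∃ h : Psi α β ⋙ Phi α β = 𝟭 (Comma (𝟭 I) (β ⋙ α)),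
      (Phi α β ⋙ Comma.fst (𝟭 I) (β ⋙ α) = Q.projI) ∧
      (Phi α β ⋙ Comma.snd (𝟭 I) (β ⋙ α) = Q.projK) ∧
      (Psi α β ⋙ Q.projI = Comma.fst (𝟭 I) (β ⋙ α)) ∧
      (Psi α β ⋙ Q.projK = Comma.snd (𝟭 I) (β ⋙ α)) ∧
      ∃ adj : Phi α β ⊣ Psi α β,
        adj.counit = eqToHom h ∧
        ∀ q : Q α β, Q.projI.map (adj.unit.app q) = 𝟙 q.i ∧
          Q.projK.map (adj.unit.app q) = 𝟙 q.k := by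
  refine ⟨psi_phi_eq α β, rfl, rfl, rfl, rfl, counitQ α β, rfl, fun q => ⟨rfl, rfl⟩⟩

end PaperComma10
end
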